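/- arXiv:1512.08090 — 3 statements merged into one kernel-verified Lean document; each statement's English description precedes it below -/
import Mathlib

section
/- The map (A,B,C) ↦ M(A,B,C) is a bijection from {(A,B,C) ∈ ℝ³ : B² − 4AC > 0} onto {g ∈ SL(2,ℝ) : tr g > 2}. Explicitly: (1) for every g = [[a,b],[c,d]] ∈ SL(2,ℝ) with a + d > 2 one has (d−a)² − 4·c·(−b) = (a+d)² − 4 > 0 and M(c, d−a, −b) = g; (2) for every (A,B,C) with B² − 4AC > 0, writing M(A,B,C) = [[a,b],[c,d]], one has (c, d−a, −b) = (A, B, C). -/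
noncomputable section

/-- The matrix associated to an indefinite binary quadratic form `[A,B,C]`:
`M(A,B,C) = [[(−B+√(D+4))/2, −C], [A, (B+√(D+4))/2]]` where `D = B² − 4AC`. -/
def MQF (A B C : ℝ) : Matrix (Fin 2) (Fin 2) ℝ :=
  !![(-B + Real.sqrt (B ^ 2 - 4 * A * C + 4)) / 2, -C;
     A, (B + Real.sqrt (B ^ 2 - 4 * A * C + 4)) / 2]

/-- `(A,B,C) ↦ M(A,B,C)` is a bijection from the indefinite forms onto
`{g ∈ SL(2,ℝ) : tr g > 2}`: (1) for `g = [[a,b],[c,d]]` with `ad − bc = 1` and `a + d > 2`,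
the form `(c, d−a, −b)` has discriminant `(a+d)² − 4 > 0` and `M(c, d−a, −b) = g`;
(2) for every `(A,B,C)` with `B² − 4AC > 0`, writing `M(A,B,C) = [[a,b],[c,d]]`,
one has `(c, d−a, −b) = (A, B, C)`. -/
theorem stmt_1 :
    (∀ a b c d : ℝ, a * d - b * c = 1 → a + d > 2 →
      (d - a) ^ 2 - 4 * c * (-b) = (a + d) ^ 2 - 4 ∧
      (a + d) ^ 2 - 4 > 0 ∧
      MQF c (d - a) (-b) = !![a, b; c, d]) ∧
    (∀ A B C : ℝ, B ^ 2 - 4 * A * C > 0 →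
      MQF A B C 1 0 = A ∧
      MQF A B C 1 1 - MQF A B C 0 0 = B ∧
      -(MQF A B C 0 1) = C) := by
  constructor
  · intro a b c d hdet htr
    have hd : (d - a) ^ 2 - 4 * c * (-b) = (a + d) ^ 2 - 4 := by nlinarith
    have hpos : (a + d) ^ 2 - 4 > 0 := by nlinarith
    refine ⟨hd, hpos, ?_⟩
    have hs : Real.sqrt ((d - a) ^ 2 - 4 * c * (-b) + 4) = a + d := by
      have : (d - a) ^ 2 - 4 * c * (-b) + 4 = (a + d) ^ 2 := by nlinarith
      rw [this, Real.sqrt_sq (by linarith)]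
    unfold MQF
    rw [hs]
    ext i j
    fin_cases i <;> fin_cases j <;> simp <;> ring
  · intro A B C _
    unfold MQF
    refine ⟨?_, ?_, ?_⟩ <;> simp <;> ring
end
end

section
/- Let g = [[α,β],[γ,δ]] ∈ SL(2,ℝ) and let f = [A,B,C] be an indefinite binary quadratic form. Define g·f := [Aδ² − Bγδ + Cγ², −2Aβδ + B(αδ+βγ) − 2Cαγ, Aβ² − Bαβ + Cα²]. Then g·f has the same discriminant as f (in particular g·f is indefinite), and M(g·f) = g · M(A,B,C) · g⁻¹ in SL(2,ℝ). -/
noncomputable section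

abbrev SL2 := Matrix.SpecialLinearGroup (Fin 2) ℝ

/-- for `g = [[α,β],[γ,δ]] ∈ SL(2,ℝ)` and an indefinite form `f = [A,B,C]`,
the form `g·f = [Aδ² − Bγδ + Cγ², −2Aβδ + B(αδ+βγ) − 2Cαγ, Aβ² − Bαβ + Cα²]`
has the same discriminant as `f`, and `M(g·f) = g · M(A,B,C) · g⁻¹` in `SL(2,ℝ)`. -/
theorem stmt_2 (g : SL2) (A B C A' B' C' : ℝ) (hD : B ^ 2 - 4 * A * C > 0)
    (hA' : A' = A * (g.1 1 1) ^ 2 - B * (g.1 1 0) * (g.1 1 1) + C * (g.1 1 0) ^ 2)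
    (hB' : B' = -2 * A * (g.1 0 1) * (g.1 1 1)
        + B * ((g.1 0 0) * (g.1 1 1) + (g.1 0 1) * (g.1 1 0))
        - 2 * C * (g.1 0 0) * (g.1 1 0))
    (hC' : C' = A * (g.1 0 1) ^ 2 - B * (g.1 0 0) * (g.1 0 1) + C * (g.1 0 0) ^ 2) :
    B' ^ 2 - 4 * A' * C' = B ^ 2 - 4 * A * C ∧
    MQF A' B' C' = g.1 * MQF A B C * (g⁻¹).1 := by
  have hdet : g.1 0 0 * g.1 1 1 - g.1 0 1 * g.1 1 0 = 1 := by
    have := g.2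
    rw [Matrix.det_fin_two] at this
    linarith
  have hdisc : B' ^ 2 - 4 * A' * C' = B ^ 2 - 4 * A * C := by
    subst hA' hB' hC'
    linear_combination ((g.1 0 0 * g.1 1 1 - g.1 0 1 * g.1 1 0 + 1) * (B ^ 2 - 4 * A * C)) * hdet
  refine ⟨hdisc, ?_⟩
  have hinv : (g⁻¹).1 = !![g.1 1 1, -g.1 0 1; -g.1 1 0, g.1 0 0] := by
    rw [Matrix.SpecialLinearGroup.SL2_inv_expl]; rfl
  rw [hinv]
  unfold MQF
  rw [hdisc]
  set s := Real.sqrt (B ^ 2 - 4 * A * C + 4) with hs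
  clear_value s
  have hg : g.1 = !![g.1 0 0, g.1 0 1; g.1 1 0, g.1 1 1] := by
    ext i j; fin_cases i <;> fin_cases j <;> simp
  rw [hg]
  ext i j
  fin_cases i <;> fin_cases j <;>
      simp [Matrix.mul_apply, Fin.sum_univ_two, hA', hB', hC']
  · linear_combination (-(s / 2)) * hdet
  · ring
  · ring
  · linear_combination (-(s / 2)) * hdet
end
end

section
/- Let f = [A,B,C] be an indefinite binary quadratic form with A ≠ 0 and discriminant D = B² − 4AC > 0. Set x₊ = (−B+√D)/(2A), x₋ = (−B−√D)/(2A), λ₊ = (√(D+4)+√D)/2 and λ₋ = (√(D+4)−√D)/2. Then M(A,B,C)·(x₊, 1)ᵀ = λ₊·(x₊, 1)ᵀ and M(A,B,C)·(x₋, 1)ᵀ = λ₋·(x₋, 1)ᵀ; that is, the zeros x₊ and x₋ of f are the attracting and repelling fixed points of the associated matrix M(A,B,C). -/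
noncomputable section

/-- for an indefinite form `[A,B,C]` with `A ≠ 0` and `D = B² − 4AC > 0`,
the zeros `x₊ = (−B+√D)/(2A)`, `x₋ = (−B−√D)/(2A)` of `f` give eigenvectors of
`M(A,B,C)` with eigenvalues `λ₊ = (√(D+4)+√D)/2` and `λ₋ = (√(D+4)−√D)/2`. -/
theorem stmt_3 (A B C : ℝ) (hA : A ≠ 0) (hD : B ^ 2 - 4 * A * C > 0) :
    (MQF A B C).mulVec
        ![(-B + Real.sqrt (B ^ 2 - 4 * A * C)) / (2 * A), 1] =
      ((Real.sqrt (B ^ 2 - 4 * A * C + 4) + Real.sqrt (B ^ 2 - 4 * A * C)) / 2) •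
        ![(-B + Real.sqrt (B ^ 2 - 4 * A * C)) / (2 * A), 1] ∧
    (MQF A B C).mulVec
        ![(-B - Real.sqrt (B ^ 2 - 4 * A * C)) / (2 * A), 1] =
      ((Real.sqrt (B ^ 2 - 4 * A * C + 4) - Real.sqrt (B ^ 2 - 4 * A * C)) / 2) •
        ![(-B - Real.sqrt (B ^ 2 - 4 * A * C)) / (2 * A), 1] := by
  have hDpos := hD.le
  have hs : Real.sqrt (B ^ 2 - 4 * A * C) ^ 2 = B ^ 2 - 4 * A * C := Real.sq_sqrt hDpos
  constructor <;>
  · funext i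
    fin_cases i <;>
      simp [MQF, Matrix.mulVec, dotProduct, Fin.sum_univ_two] <;>
      field_simp <;> nlinarith [hs, sq_nonneg (Real.sqrt (B^2-4*A*C))]
end
end
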